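/- Let v_1,...,v_s ∈ R^d, ε_1,...,ε_s iid N(0, s/M − 1) with sample mean ε̄, and define λ' = (1/s)Σ_{n=1}^s (1 + ε_n − ε̄)·v_n. Then E[λ'] = (1/s)Σ_n v_n and Cov(λ') = (1/M − 1/s)·Σ_v, where Σ_v = (1/s)Σ_n (v_n − μ)(v_n − μ)^T and μ = (1/s)Σ_n v_n. -/

import Mathlib

open MeasureTheory ProbabilityTheory Finset Matrix
open Real NNReal ENNReal

-- density rewrite
lemma gauss_int (v : ℝ≥0) (hv : v ≠ 0) (g : ℝ → ℝ) :
    ∫ x, g x ∂(gaussianReal 0 v) = ∫ x, gaussianPDFReal 0 v x * g x := by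
  rw [gaussianReal_of_var_ne_zero 0 hv]
  have hf : Measurable fun x => (gaussianPDFReal 0 v x).toNNReal :=
    (measurable_gaussianPDFReal 0 v).real_toNNReal
  have : (gaussianPDF 0 v) = fun x => ((gaussianPDFReal 0 v x).toNNReal : ℝ≥0∞) := rfl
  rw [this, integral_withDensity_eq_integral_smul hf g]
  congr 1; ext x
  simp [NNReal.smul_def, Real.coe_toNNReal _ (gaussianPDFReal_nonneg 0 v x)]

lemma gauss_integrable_iff (v : ℝ≥0) (hv : v ≠ 0) (g : ℝ → ℝ) :
    Integrable g (gaussianReal 0 v) ↔ Integrable (fun x => gaussianPDFReal 0 v x * g x) := by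
  rw [gaussianReal_of_var_ne_zero 0 hv]
  have hf : Measurable fun x => (gaussianPDFReal 0 v x).toNNReal :=
    (measurable_gaussianPDFReal 0 v).real_toNNReal
  have : (gaussianPDF 0 v) = fun x => ((gaussianPDFReal 0 v x).toNNReal : ℝ≥0∞) := rfl
  rw [this, integrable_withDensity_iff_integrable_smul hf]
  constructor <;> intro h <;> refine h.congr (Filter.Eventually.of_forall fun x => ?_) <;>
    simp [NNReal.smul_def, Real.coe_toNNReal _ (gaussianPDFReal_nonneg 0 v x)]

lemma pdf0 (v : ℝ≥0) (x : ℝ) :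
    gaussianPDFReal 0 v x = (Real.sqrt (2 * π * v))⁻¹ * Real.exp (-(2 * (v:ℝ))⁻¹ * x ^ 2) := by
  rw [gaussianPDFReal]
  ring_nf

lemma gauss_mean (v : ℝ≥0) : ∫ x, x ∂(gaussianReal 0 v) = 0 := by
  have h := gaussianReal_map_const_mul (μ := 0) (v := v) (-1)
  have hv : ∀ p, (NNReal.mk ((-1:ℝ)^2) p * v : ℝ≥0) = v := by intro p; rw [← NNReal.coe_inj]; simp
  rw [hv, mul_zero] at h
  have h2 : ∫ x, x ∂(gaussianReal 0 v) = ∫ x, (-1 : ℝ) * x ∂(gaussianReal 0 v) := by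
    conv_lhs => rw [← h]
    rw [integral_map (f := fun x : ℝ => x) ((measurable_const_mul (-1:ℝ)).aemeasurable) aestronglyMeasurable_id]
  have h3 : ∫ x, (-1:ℝ) * x ∂(gaussianReal 0 v) = -∫ x, x ∂(gaussianReal 0 v) := by
    simp only [neg_one_mul]; exact integral_neg _
  rw [h3] at h2
  linarith

lemma gauss_integrable_id (v : ℝ≥0) (hv : v ≠ 0) :
    Integrable (fun x : ℝ => x) (gaussianReal 0 v) := by
  rw [gauss_integrable_iff v hv]
  have hb : 0 < (2 * (v:ℝ))⁻¹ := by
    have : 0 < (v:ℝ) := by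
      have := pos_iff_ne_zero.mpr hv
      exact_mod_cast this
    positivity
  have := (integrable_mul_exp_neg_mul_sq hb).const_mul (Real.sqrt (2 * π * v))⁻¹
  refine this.congr (Filter.Eventually.of_forall fun x => ?_)
  simp only [pdf0]; ring

lemma gauss_integrable_sq (v : ℝ≥0) (hv : v ≠ 0) :
    Integrable (fun x : ℝ => x * x) (gaussianReal 0 v) := by
  rw [gauss_integrable_iff v hv]
  have hb : 0 < (2 * (v:ℝ))⁻¹ := by
    have : 0 < (v:ℝ) := by
      have := pos_iff_ne_zero.mpr hv
      exact_mod_cast this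
    positivity
  have := (integrable_rpow_mul_exp_neg_mul_sq hb (by norm_num : (-1:ℝ) < 2)).const_mul
    (Real.sqrt (2 * π * v))⁻¹
  refine this.congr (Filter.Eventually.of_forall fun x => ?_)
  have h2 : x ^ (2:ℝ) = x ^ 2 := by
    rw [show (2:ℝ) = ((2:ℕ):ℝ) by norm_num, Real.rpow_natCast]
  simp only [pdf0, h2]; ring

lemma gauss_sq (v : ℝ≥0) (hv : v ≠ 0) :
    ∫ x, x * x ∂(gaussianReal 0 v) = (v : ℝ) := by
  have hvpos : 0 < (v:ℝ) := by
    have := pos_iff_ne_zero.mpr hv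
    exact_mod_cast this
  set t : ℝ := 2 * (v:ℝ) with htdef
  have ht : 0 < t := by positivity
  have hb : 0 < t⁻¹ := by positivity
  rw [gauss_int v hv]
  have hpt : ∀ x : ℝ, gaussianPDFReal 0 v x * (x * x)
      = (Real.sqrt (2 * π * v))⁻¹ * (x ^ 2 * Real.exp (-t⁻¹ * x ^ 2)) := by
    intro x; rw [pdf0]; ring
  simp only [hpt]
  rw [MeasureTheory.integral_const_mul]
  -- full line = 2 * half line
  have habs : ∫ x : ℝ, x ^ 2 * Real.exp (-t⁻¹ * x ^ 2)
      = 2 * ∫ x in Set.Ioi (0:ℝ), x ^ 2 * Real.exp (-t⁻¹ * x ^ 2) := by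
    rw [← _root_.integral_comp_abs (f := fun y => y ^ 2 * Real.exp (-t⁻¹ * y ^ 2))]
    simp [sq_abs]
  have hhalf : ∫ x in Set.Ioi (0:ℝ), x ^ 2 * Real.exp (-t⁻¹ * x ^ 2)
      = t⁻¹ ^ (-(3:ℝ)/2) * (1/2) * Real.Gamma (3/2) := by
    have h := integral_rpow_mul_exp_neg_mul_rpow (p := 2) (q := 2) (b := t⁻¹)
      (by norm_num) (by norm_num) hb
    norm_num at h ⊢
    rw [← h]
  have hGamma : Real.Gamma (3/2) = Real.sqrt π / 2 := by
    rw [show (3/2 : ℝ) = 1/2 + 1 by norm_num, Real.Gamma_add_one (by norm_num),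
      Real.Gamma_one_half_eq]
    ring
  have hrw : t⁻¹ ^ (-(3:ℝ)/2) = t * Real.sqrt t := by
    rw [show (-(3:ℝ)/2) = -(3/2) by ring, Real.inv_rpow ht.le, Real.rpow_neg ht.le, inv_inv,
      show (3/2 : ℝ) = 1 + 1/2 by norm_num, Real.rpow_add ht, Real.rpow_one,
      ← Real.sqrt_eq_rpow]
  have hsq : Real.sqrt (2 * π * (v:ℝ)) = Real.sqrt π * Real.sqrt t := by
    rw [show 2 * π * (v:ℝ) = π * t by ring, Real.sqrt_mul Real.pi_pos.le]
  rw [habs, hhalf, hGamma, hrw, hsq]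
  have hst : Real.sqrt t ≠ 0 := by positivity
  have hsp : Real.sqrt π ≠ 0 := by positivity
  have hv2 : (v:ℝ) = t / 2 := by rw [htdef]; ring
  rw [hv2]
  have h1 : Real.sqrt t * Real.sqrt t = t := Real.mul_self_sqrt ht.le
  field_simp

lemma key_alg {s : ℕ} (e w : Fin s → ℝ) (c : ℝ) :
    c * ∑ n, (1 + e n - c * ∑ m, e m) * w n
      = c * ∑ n, w n + c * ∑ n, e n * (w n - c * ∑ m, w m) := by
  simp only [add_mul, sub_mul, one_mul, mul_sub, Finset.sum_add_distrib, Finset.sum_sub_distrib,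
    ← Finset.mul_sum, ← Finset.sum_mul]
  ring


/-- Mean and covariance of the SVI+ noise-augmented statistic: with fixed vectors
`v_1,…,v_s ∈ ℝ^d`, iid noise `ε_n ∼ N(0, s/M − 1)` with sample mean `ε̄`, and
`λ' = (1/s)∑_n (1 + ε_n − ε̄)·v_n`, one has `E[λ'] = (1/s)∑_n v_n = μ` and
`Cov(λ') = (1/M − 1/s)·Σ_v`, where `Σ_v = (1/s)∑_n (v_n − μ)(v_n − μ)ᵀ`. -/
theorem sviPlus_gradient_moments {Ω : Type*} [MeasurableSpace Ω] (s d : ℕ) (hs : 0 < s)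
    (P : Measure Ω) [IsProbabilityMeasure P]
    (M : ℝ) (hM : 0 < M) (hMs : M < (s : ℝ))
    (ε : Fin s → Ω → ℝ) (hmeas : ∀ n, Measurable (ε n))
    (hlaw : ∀ n, Measure.map (ε n) P = gaussianReal 0 (Real.toNNReal ((s : ℝ) / M - 1)))
    (hindep : iIndepFun ε P)
    (εbar : Ω → ℝ) (hεbar : εbar = fun ω => (s : ℝ)⁻¹ * ∑ n : Fin s, ε n ω)
    (v : Fin s → Fin d → ℝ)
    (μ : Fin d → ℝ) (hμ : μ = (s : ℝ)⁻¹ • ∑ n : Fin s, v n)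
    (Sv : Matrix (Fin d) (Fin d) ℝ)
    (hSv : Sv = (s : ℝ)⁻¹ • ∑ n : Fin s, vecMulVec (v n - μ) (v n - μ))
    (lam : Ω → Fin d → ℝ)
    (hlam : lam = fun ω => (s : ℝ)⁻¹ • ∑ n : Fin s, (1 + ε n ω - εbar ω) • v n) :
    (∀ i, ∫ ω, lam ω i ∂P = μ i) ∧
    (∀ i j, ∫ ω, (lam ω i - μ i) * (lam ω j - μ j) ∂P = (M⁻¹ - (s : ℝ)⁻¹) * Sv i j) := by
  set V : ℝ≥0 := Real.toNNReal ((s : ℝ) / M - 1) with hV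
  have hs' : (s:ℝ) ≠ 0 := Nat.cast_ne_zero.mpr hs.ne'
  have hσpos : (0:ℝ) < (s : ℝ) / M - 1 := by
    rw [sub_pos, lt_div_iff₀ hM]; linarith
  have hVne : V ≠ 0 := by
    rw [hV, ← NNReal.coe_ne_zero, Real.coe_toNNReal _ hσpos.le]
    exact hσpos.ne'
  have hVr : (V : ℝ) = (s:ℝ)/M - 1 := Real.coe_toNNReal _ hσpos.le
  have intEps : ∀ n, Integrable (ε n) P := by
    intro n
    have h := gauss_integrable_id V hVne
    rw [← hlaw n] at h
    exact (integrable_map_measure aestronglyMeasurable_id (hmeas n).aemeasurable).mp h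
  have meanEps : ∀ n, ∫ ω, ε n ω ∂P = 0 := by
    intro n
    have h := integral_map (φ := ε n) (μ := P) (hmeas n).aemeasurable
      (f := fun x : ℝ => x) aestronglyMeasurable_id
    rw [hlaw n, gauss_mean V] at h
    exact h.symm
  have intSq : ∀ n, Integrable (fun ω => ε n ω * ε n ω) P := by
    intro n
    have h := gauss_integrable_sq V hVne
    rw [← hlaw n] at h
    exact (integrable_map_measure (measurable_id.mul measurable_id).aestronglyMeasurable
      (hmeas n).aemeasurable).mp h
  have momSq : ∀ n, ∫ ω, ε n ω * ε n ω ∂P = (s:ℝ)/M - 1 := by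
    intro n
    have h := integral_map (φ := ε n) (μ := P) (hmeas n).aemeasurable
      (f := fun x : ℝ => x * x) (measurable_id.mul measurable_id).aestronglyMeasurable
    rw [hlaw n, gauss_sq V hVne] at h
    have h2 : ∫ ω, ε n ω * ε n ω ∂P = (V:ℝ) := h.symm
    rw [h2, hVr]
  have prodInt : ∀ n m : Fin s, Integrable (fun ω => ε n ω * ε m ω) P := by
    intro n m
    rcases eq_or_ne n m with rfl | h
    · exact intSq n
    · exact (hindep.indepFun h).integrable_mul (intEps n) (intEps m)
  have prodMom : ∀ n m : Fin s, ∫ ω, ε n ω * ε m ω ∂P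
      = if n = m then (s:ℝ)/M - 1 else 0 := by
    intro n m
    rcases eq_or_ne n m with rfl | h
    · simp [momSq n]
    · rw [if_neg h]
      have := IndepFun.integral_mul_eq_mul_integral (hindep.indepFun h) (intEps n).aestronglyMeasurable (intEps m).aestronglyMeasurable
      rw [show (ε n * ε m) = fun ω => ε n ω * ε m ω from rfl] at this
      rw [this, meanEps n, zero_mul]
  have hlam' : ∀ ω i, lam ω i = μ i + (s:ℝ)⁻¹ * ∑ n, ε n ω * (v n i - μ i) := by
    intro ω i
    have h1 : lam ω i = (s:ℝ)⁻¹ * ∑ n, (1 + ε n ω - (s:ℝ)⁻¹ * ∑ m, ε m ω) * v n i := by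
      rw [hlam, hεbar]
      simp [Finset.sum_apply, smul_eq_mul]
    have h2 : μ i = (s:ℝ)⁻¹ * ∑ n, v n i := by
      rw [hμ]; simp [Finset.sum_apply]
    rw [h1, h2, key_alg]
  constructor
  · intro i
    have hInt2 : Integrable (fun ω => (s:ℝ)⁻¹ * ∑ n, ε n ω * (v n i - μ i)) P :=
      (integrable_finset_sum univ (fun n _ => (intEps n).mul_const _)).const_mul _
    have : ∫ ω, lam ω i ∂P
        = ∫ ω, (μ i + (s:ℝ)⁻¹ * ∑ n, ε n ω * (v n i - μ i)) ∂P := by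
      congr 1; funext ω; exact hlam' ω i
    rw [this, integral_add (integrable_const _) hInt2, integral_const, integral_const_mul,
      integral_finset_sum _ (fun n _ => (intEps n).mul_const _)]
    simp [integral_mul_const, meanEps]
  · intro i j
    have hptw : ∀ ω, (lam ω i - μ i) * (lam ω j - μ j)
        = (s:ℝ)⁻¹ * (s:ℝ)⁻¹ *
          ∑ n, ∑ m, (v n i - μ i) * (v m j - μ j) * (ε n ω * ε m ω) := by
      intro ω
      rw [hlam' ω i, hlam' ω j]
      have : (μ i + (s:ℝ)⁻¹ * ∑ n, ε n ω * (v n i - μ i) - μ i)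
          * (μ j + (s:ℝ)⁻¹ * ∑ m, ε m ω * (v m j - μ j) - μ j)
          = (s:ℝ)⁻¹ * (s:ℝ)⁻¹ *
            ((∑ n, ε n ω * (v n i - μ i)) * (∑ m, ε m ω * (v m j - μ j))) := by ring
      rw [this, Finset.sum_mul_sum]
      congr 1
      refine Finset.sum_congr rfl fun n _ => Finset.sum_congr rfl fun m _ => by ring
    have hint : ∀ n : Fin s, Integrable
        (fun ω => ∑ m, (v n i - μ i) * (v m j - μ j) * (ε n ω * ε m ω)) P :=
      fun n => integrable_finset_sum univ (fun m _ => (prodInt n m).const_mul _)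
    have : ∫ ω, (lam ω i - μ i) * (lam ω j - μ j) ∂P
        = (s:ℝ)⁻¹ * (s:ℝ)⁻¹ *
          ∑ n, ∑ m, (v n i - μ i) * (v m j - μ j) * (∫ ω, ε n ω * ε m ω ∂P) := by
      rw [show (fun ω => (lam ω i - μ i) * (lam ω j - μ j))
          = fun ω => (s:ℝ)⁻¹ * (s:ℝ)⁻¹ *
            ∑ n, ∑ m, (v n i - μ i) * (v m j - μ j) * (ε n ω * ε m ω) from funext hptw,
        integral_const_mul, integral_finset_sum _ (fun n _ => hint n)]
      congr 1
      refine Finset.sum_congr rfl fun n _ => ?_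
      rw [integral_finset_sum _ (fun m _ => (prodInt n m).const_mul _)]
      exact Finset.sum_congr rfl fun m _ => integral_const_mul _ _
    rw [this]
    have hdiag : ∀ n : Fin s,
        ∑ m, (v n i - μ i) * (v m j - μ j) * (∫ ω, ε n ω * ε m ω ∂P)
          = (v n i - μ i) * (v n j - μ j) * ((s:ℝ)/M - 1) := by
      intro n
      simp only [prodMom, mul_ite, mul_zero]
      simp [Finset.sum_ite_eq]
    simp only [hdiag]
    have hSvij : Sv i j = (s:ℝ)⁻¹ * ∑ n, (v n i - μ i) * (v n j - μ j) := by
      rw [hSv]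
      simp [Matrix.sum_apply, vecMulVec_apply, Finset.mul_sum]
    rw [hSvij]
    simp only [Finset.mul_sum]
    refine Finset.sum_congr rfl fun n _ => ?_
    field_simp
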